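/- Let {M_t} be a Hilbert-space-valued martingale with E[‖M_{t+1} − M_t‖² | F_t] = 1 and ‖M_{t+1} − M_t‖ ≤ B almost surely. For R ≥ 0 let τ be the first time t with ‖M_t − M_0‖ ≥ R. Then R² ≤ E[τ] ≤ (R + B)². -/

import Mathlib

open MeasureTheory Filter Topology
open scoped ENNReal RealInnerProductSpace

lemma aux_integrable_inner {Ω : Type*} {m : MeasurableSpace Ω} {μ : Measure Ω}
    {H : Type*} [NormedAddCommGroup H] [InnerProductSpace ℝ H]
    {V g : Ω → H} (hV : AEStronglyMeasurable V μ) {C : ℝ}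
    (hVb : ∀ᵐ ω ∂μ, ‖V ω‖ ≤ C) (hg : Integrable g μ) :
    Integrable (fun ω => ⟪V ω, g ω⟫) μ := by
  refine (hg.norm.const_mul C).mono' (hV.inner hg.aestronglyMeasurable) ?_
  filter_upwards [hVb] with ω h
  calc ‖⟪V ω, g ω⟫‖ ≤ ‖V ω‖ * ‖g ω‖ := norm_inner_le_norm _ _
    _ ≤ C * ‖g ω‖ := by gcongr

lemma aux_integral_inner_zero {Ω : Type*} {mm : MeasurableSpace Ω}
    {m : MeasurableSpace Ω} {μ : Measure Ω}
    [IsProbabilityMeasure μ]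
    {H : Type*} [NormedAddCommGroup H] [InnerProductSpace ℝ H] [CompleteSpace H]
    (hm : mm ≤ m) {V g : Ω → H}
    (hV : StronglyMeasurable[mm] V) {C : ℝ} (hC : 0 ≤ C)
    (hVb : ∀ᵐ ω ∂μ, ‖V ω‖ ≤ C)
    (hg : Integrable g μ) (hg0 : ∀ A, MeasurableSet[mm] A → ∫ ω in A, g ω ∂μ = 0) :
    ∫ ω, ⟪V ω, g ω⟫ ∂μ = 0 := by
  -- simple functions case
  have hsimple : ∀ s : @SimpleFunc Ω mm H, ∫ ω, ⟪s ω, g ω⟫ ∂μ = 0 := by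
    intro s
    refine @SimpleFunc.induction Ω H mm _ (fun s => ∫ ω, ⟪s ω, g ω⟫ ∂μ = 0) ?_ ?_ s
    · intro c A hA
      classical
      have hA' : MeasurableSet[m] A := hm A hA
      have key : ∫ ω, ⟪if ω ∈ A then c else (0 : H), g ω⟫ ∂μ = 0 := by
        have heq : (fun ω => ⟪if ω ∈ A then c else (0 : H), g ω⟫)
            = A.indicator (fun ω => ⟪c, g ω⟫) := by
          funext ω; by_cases h : ω ∈ A <;> simp [h]
        rw [heq, integral_indicator hA', integral_inner hg.integrableOn, hg0 A hA,
          inner_zero_right]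
      simpa [SimpleFunc.piecewise_apply] using key
    · intro f₁ f₂ _ h₁ h₂
      obtain ⟨C₁, hC₁⟩ := @SimpleFunc.exists_forall_norm_le Ω H mm _ f₁
      obtain ⟨C₂, hC₂⟩ := @SimpleFunc.exists_forall_norm_le Ω H mm _ f₂
      have i₁ : Integrable (fun ω => ⟪f₁ ω, g ω⟫) μ :=
        aux_integrable_inner ((f₁.stronglyMeasurable.mono hm).aestronglyMeasurable)
          (Eventually.of_forall hC₁) hg
      have i₂ : Integrable (fun ω => ⟪f₂ ω, g ω⟫) μ :=
        aux_integrable_inner ((f₂.stronglyMeasurable.mono hm).aestronglyMeasurable)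
          (Eventually.of_forall hC₂) hg
      have heq : (fun ω => ⟪(f₁ + f₂) ω, g ω⟫)
          = fun ω => ⟪f₁ ω, g ω⟫ + ⟪f₂ ω, g ω⟫ := by
        funext ω; simp [inner_add_left]
      rw [heq, integral_add i₁ i₂, h₁, h₂, add_zero]
  -- approximation
  set fs := hV.approxBounded C with hfs
  have htend : ∀ᵐ ω ∂μ, Tendsto (fun n => fs n ω) atTop (𝓝 (V ω)) :=
    hV.tendsto_approxBounded_ae (μ := μ) hVb
  have hfsb : ∀ n ω, ‖fs n ω‖ ≤ C := fun n ω => hV.norm_approxBounded_le hC n ω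
  have key : Tendsto (fun n => ∫ ω, ⟪fs n ω, g ω⟫ ∂μ) atTop (𝓝 (∫ ω, ⟪V ω, g ω⟫ ∂μ)) := by
    refine tendsto_integral_of_dominated_convergence (fun ω => C * ‖g ω‖)
      (fun n => AEStronglyMeasurable.inner
        (((fs n).stronglyMeasurable.mono hm).aestronglyMeasurable)
        hg.aestronglyMeasurable) (hg.norm.const_mul C) ?_ ?_
    · intro n
      refine Eventually.of_forall fun ω => ?_
      calc ‖⟪fs n ω, g ω⟫‖ ≤ ‖fs n ω‖ * ‖g ω‖ := norm_inner_le_norm _ _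
        _ ≤ C * ‖g ω‖ := by gcongr; exact hfsb n ω
    · filter_upwards [htend] with ω hω
      exact Tendsto.inner hω tendsto_const_nhds
  have hz : (fun n => ∫ ω, ⟪fs n ω, g ω⟫ ∂μ) = fun _ => (0 : ℝ) := by
    funext n; exact hsimple (fs n)
  rw [hz] at key
  exact tendsto_nhds_unique key tendsto_const_nhds

theorem stmt10 {Ω : Type*} {m : MeasurableSpace Ω} {μ : Measure Ω} [IsProbabilityMeasure μ]
    (ℱ : Filtration ℕ m)
    {H : Type*} [NormedAddCommGroup H] [InnerProductSpace ℝ H] [CompleteSpace H]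
    (M : ℕ → Ω → H) (hM : Martingale M ℱ μ)
    (B : ℝ) (hB : 1 ≤ B)
    (hbdd : ∀ t : ℕ, ∀ᵐ ω ∂μ, ‖M (t + 1) ω - M t ω‖ ≤ B)
    (hvar : ∀ t : ℕ,
      μ[(fun ω => ‖M (t + 1) ω - M t ω‖ ^ 2)|ℱ t] =ᵐ[μ] fun _ => (1 : ℝ))
    (R : ℝ) (hR : 0 ≤ R)
    (τ : Ω → ℝ≥0∞)
    (hτ : ∀ ω, τ ω = sInf ((fun t : ℕ => (t : ℝ≥0∞)) '' {t : ℕ | R ≤ ‖M t ω - M 0 ω‖})) :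
    ENNReal.ofReal (R ^ 2) ≤ ∫⁻ ω, τ ω ∂μ ∧
      ∫⁻ ω, τ ω ∂μ ≤ ENNReal.ofReal ((R + B) ^ 2) := by
  classical
  have hB0 : (0 : ℝ) ≤ B := le_trans zero_le_one hB
  set X : ℕ → Ω → H := fun n ω => M n ω - M 0 ω with hX
  have hXsm : ∀ n, StronglyMeasurable[ℱ n] (X n) := fun n =>
    (hM.stronglyAdapted n).sub ((hM.stronglyAdapted 0).mono (ℱ.mono (Nat.zero_le n)))
  have hXm : ∀ n, StronglyMeasurable[m] (X n) := fun n => (hXsm n).mono (ℱ.le n)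
  set G : ℕ → Set Ω := fun n => {ω | ∀ k ≤ n, ‖X k ω‖ < R} with hG
  have hGmem : ∀ n ω, ω ∈ G n ↔ ∀ k ≤ n, ‖X k ω‖ < R := fun n ω => Iff.rfl
  have hGmeas : ∀ n, MeasurableSet[ℱ n] (G n) := by
    intro n
    have heq : G n = ⋂ k, ⋂ _ : k ≤ n, {ω | ‖X k ω‖ < R} := by
      ext ω; simp [hGmem]
    rw [heq]
    refine MeasurableSet.iInter fun k => MeasurableSet.iInter fun hk => ?_
    have hsm : StronglyMeasurable[ℱ n] (X k) := (hXsm k).mono (ℱ.mono hk)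
    exact measurableSet_lt hsm.norm.measurable measurable_const
  have hGm : ∀ n, MeasurableSet[m] (G n) := fun n => ℱ.le n _ (hGmeas n)
  have hGanti : ∀ {i j : ℕ}, i ≤ j → G j ⊆ G i := by
    intro i j hij ω hω k hk
    exact hω k (hk.trans hij)
  have hball : ∀ᵐ ω ∂μ, ∀ t, ‖M (t + 1) ω - M t ω‖ ≤ B := ae_all_iff.2 hbdd
  have hXstep : ∀ n ω, X (n + 1) ω = X n ω + (M (n + 1) ω - M n ω) := by
    intro n ω; simp only [hX]; abel
  have hXbd : ∀ᵐ ω ∂μ, ∀ n : ℕ, ‖X n ω‖ ≤ n * B := by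
    filter_upwards [hball] with ω hb
    intro n
    induction n with
    | zero => simp [hX]
    | succ n ih =>
      calc ‖X (n + 1) ω‖ ≤ ‖X n ω‖ + ‖M (n + 1) ω - M n ω‖ := by
            rw [hXstep n ω]; exact norm_add_le _ _
        _ ≤ n * B + B := add_le_add ih (hb n)
        _ = (n + 1 : ℕ) * B := by push_cast; ring
  -- Step A : lintegral of τ as a sum
  have hτ_eq : ∀ ω, τ ω = ∑' n, (G n).indicator (fun _ => (1 : ℝ≥0∞)) ω := by
    intro ω
    rw [hτ ω]
    by_cases h : ∃ t, R ≤ ‖M t ω - M 0 ω‖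
    · set c := Nat.find h with hc
      have hmemG : ∀ n, ω ∈ G n ↔ n < c := by
        intro n
        constructor
        · intro hωn
          by_contra hnc
          push_neg at hnc
          exact absurd (Nat.find_spec h) (not_le.2 (hωn c hnc))
        · intro hnc k hk
          exact lt_of_not_ge (Nat.find_min h (lt_of_le_of_lt hk hnc))
      have h1 : sInf ((fun t : ℕ => (t : ℝ≥0∞)) '' {t : ℕ | R ≤ ‖M t ω - M 0 ω‖})
          = (c : ℝ≥0∞) := by
        apply le_antisymm
        · exact sInf_le ⟨c, Nat.find_spec h, rfl⟩
        · refine le_sInf ?_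
          rintro x ⟨t, ht, rfl⟩
          show (c : ℝ≥0∞) ≤ (t : ℝ≥0∞)
          exact_mod_cast Nat.find_min' h ht
      rw [h1]
      have hind : ∀ n, (G n).indicator (fun _ => (1 : ℝ≥0∞)) ω
          = if n < c then 1 else 0 := by
        intro n
        by_cases hn : ω ∈ G n
        · rw [Set.indicator_of_mem hn, if_pos ((hmemG n).1 hn)]
        · rw [Set.indicator_of_notMem hn, if_neg fun hlt => hn ((hmemG n).2 hlt)]
      rw [tsum_congr hind,
        tsum_eq_sum (s := Finset.range c) (fun n hn => if_neg (by simpa using hn))]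
      have : ∀ n ∈ Finset.range c, (if n < c then (1 : ℝ≥0∞) else 0) = 1 := by
        intro n hn; rw [if_pos (Finset.mem_range.1 hn)]
      rw [Finset.sum_congr rfl this]
      simp
    · push_neg at h
      have hset : {t : ℕ | R ≤ ‖M t ω - M 0 ω‖} = ∅ := by
        ext t; simp [not_le.2 (h t)]
      rw [hset]
      have hall : ∀ n, (G n).indicator (fun _ => (1 : ℝ≥0∞)) ω = 1 := fun n =>
        Set.indicator_of_mem (show ω ∈ G n from fun k _ => h k) _
      rw [tsum_congr hall, ENNReal.tsum_const_eq_top_of_ne_zero one_ne_zero]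
      simp
  have hlint : ∫⁻ ω, τ ω ∂μ = ∑' n, μ (G n) := by
    calc ∫⁻ ω, τ ω ∂μ = ∫⁻ ω, ∑' n, (G n).indicator (fun _ => (1 : ℝ≥0∞)) ω ∂μ :=
          lintegral_congr hτ_eq
      _ = ∑' n, ∫⁻ ω, (G n).indicator (fun _ => (1 : ℝ≥0∞)) ω ∂μ :=
          lintegral_tsum fun n => (measurable_const.indicator (hGm n)).aemeasurable
      _ = ∑' n, μ (G n) := tsum_congr fun n => lintegral_indicator_one (hGm n)
  -- integrability facts
  have hXsq_int : ∀ k : ℕ, Integrable (fun ω => ‖X k ω‖ ^ 2) μ := by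
    intro k
    refine (integrable_const ((k * B) ^ 2)).mono'
      ((hXm k).norm.pow 2).aestronglyMeasurable ?_
    filter_upwards [hXbd] with ω hb
    rw [Real.norm_eq_abs, abs_of_nonneg (by positivity)]
    exact pow_le_pow_left₀ (norm_nonneg _) (hb k) 2
  have hdM_int : ∀ k : ℕ, Integrable (fun ω => M (k + 1) ω - M k ω) μ := fun k =>
    (hM.integrable (k + 1)).sub (hM.integrable k)
  have hdMm : ∀ k : ℕ, StronglyMeasurable[m] (fun ω => M (k + 1) ω - M k ω) := fun k =>
    ((hM.stronglyAdapted (k + 1)).mono (ℱ.le (k + 1))).sub ((hM.stronglyAdapted k).mono (ℱ.le k))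
  have hdMsq_int : ∀ k : ℕ, Integrable (fun ω => ‖M (k + 1) ω - M k ω‖ ^ 2) μ := by
    intro k
    refine (integrable_const (B ^ 2)).mono' ((hdMm k).norm.pow 2).aestronglyMeasurable ?_
    filter_upwards [hbdd k] with ω hb
    rw [Real.norm_eq_abs, abs_of_nonneg (by positivity)]
    exact pow_le_pow_left₀ (norm_nonneg _) hb 2
  have hinner_int : ∀ k : ℕ,
      Integrable (fun ω => (inner ℝ (X k ω) (M (k + 1) ω - M k ω) : ℝ)) μ := by
    intro k
    refine aux_integrable_inner (hXm k).aestronglyMeasurable (C := k * B) ?_ (hdM_int k)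
    filter_upwards [hXbd] with ω hb using hb k
  -- Step B : the key one-step identity
  have key : ∀ k : ℕ, ∫ ω in G k, ‖X (k + 1) ω‖ ^ 2 ∂μ
      = ∫ ω in G k, ‖X k ω‖ ^ 2 ∂μ + (μ (G k)).toReal := by
    intro k
    have hexp : ∀ ω, ‖X (k + 1) ω‖ ^ 2
        = ‖X k ω‖ ^ 2 + 2 * (inner ℝ (X k ω) (M (k + 1) ω - M k ω) : ℝ)
          + ‖M (k + 1) ω - M k ω‖ ^ 2 := by
      intro ω
      rw [hXstep k ω, norm_add_sq_real]
    -- inner part is zero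
    have hzero : ∫ ω in G k, (inner ℝ (X k ω) (M (k + 1) ω - M k ω) : ℝ) ∂μ = 0 := by
      have hg0 : ∀ A, MeasurableSet[ℱ k] A →
          ∫ ω in A, (M (k + 1) ω - M k ω) ∂μ = 0 := by
        intro A hA
        rw [integral_sub ((hM.integrable (k + 1)).integrableOn)
          ((hM.integrable k).integrableOn),
          ← hM.setIntegral_eq (Nat.le_succ k) hA, sub_self]
      have hV : StronglyMeasurable[ℱ k] ((G k).indicator (X k)) :=
        (hXsm k).indicator (hGmeas k)
      have hVb : ∀ᵐ ω ∂μ, ‖(G k).indicator (X k) ω‖ ≤ k * B := by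
        filter_upwards [hXbd] with ω hb
        by_cases hω : ω ∈ G k
        · rw [Set.indicator_of_mem hω]; exact hb k
        · rw [Set.indicator_of_notMem hω]; simp; positivity
      have h0 := aux_integral_inner_zero (ℱ.le k) hV (by positivity) hVb (hdM_int k) hg0
      have heq : (fun ω => (inner ℝ ((G k).indicator (X k) ω) (M (k + 1) ω - M k ω) : ℝ))
          = (G k).indicator (fun ω => (inner ℝ (X k ω) (M (k + 1) ω - M k ω) : ℝ)) := by
        funext ω
        by_cases hω : ω ∈ G k
        · rw [Set.indicator_of_mem hω, Set.indicator_of_mem hω]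
        · rw [Set.indicator_of_notMem hω, Set.indicator_of_notMem hω, inner_zero_left]
      rw [heq, integral_indicator (hGm k)] at h0
      exact h0
    -- quadratic variation part
    have hqv : ∫ ω in G k, ‖M (k + 1) ω - M k ω‖ ^ 2 ∂μ = (μ (G k)).toReal := by
      have h1 : ∫ ω in G k, ‖M (k + 1) ω - M k ω‖ ^ 2 ∂μ
          = ∫ ω in G k, (μ[(fun ω => ‖M (k + 1) ω - M k ω‖ ^ 2)|ℱ k]) ω ∂μ :=
        (setIntegral_condExp (ℱ.le k) (hdMsq_int k) (hGmeas k)).symm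
      rw [h1, setIntegral_congr_ae (hGm k) ((hvar k).mono fun ω hω _ => hω)]
      simp; rfl
    calc ∫ ω in G k, ‖X (k + 1) ω‖ ^ 2 ∂μ
        = ∫ ω in G k, (‖X k ω‖ ^ 2 + 2 * (inner ℝ (X k ω) (M (k + 1) ω - M k ω) : ℝ)
            + ‖M (k + 1) ω - M k ω‖ ^ 2) ∂μ := by
          exact setIntegral_congr_fun (hGm k) fun ω _ => hexp ω
      _ = ∫ ω in G k, (‖X k ω‖ ^ 2 + 2 * (inner ℝ (X k ω) (M (k + 1) ω - M k ω) : ℝ)) ∂μ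
            + ∫ ω in G k, ‖M (k + 1) ω - M k ω‖ ^ 2 ∂μ := by
          exact integral_add ((hXsq_int k).integrableOn.add
            (((hinner_int k).const_mul 2).integrableOn)) (hdMsq_int k).integrableOn
      _ = ∫ ω in G k, ‖X k ω‖ ^ 2 ∂μ
            + 2 * ∫ ω in G k, (inner ℝ (X k ω) (M (k + 1) ω - M k ω) : ℝ) ∂μ
            + (μ (G k)).toReal := by
          rw [integral_add (hXsq_int k).integrableOn
            ((hinner_int k).const_mul 2).integrableOn, integral_const_mul, hqv]
      _ = ∫ ω in G k, ‖X k ω‖ ^ 2 ∂μ + (μ (G k)).toReal := by rw [hzero]; ring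
  -- the stopped process
  set Y : ℕ → Ω → ℝ := fun n ω => ∑ k ∈ Finset.range n,
    (G k).indicator (fun ω => ‖X (k + 1) ω‖ ^ 2 - ‖X k ω‖ ^ 2) ω with hY
  have hDint : ∀ k : ℕ, Integrable
      ((G k).indicator (fun ω => ‖X (k + 1) ω‖ ^ 2 - ‖X k ω‖ ^ 2)) μ := fun k =>
    ((hXsq_int (k + 1)).sub (hXsq_int k)).indicator (hGm k)
  have hYint : ∀ n, Integrable (Y n) μ := by
    intro n
    have : Y n = fun ω => ∑ k ∈ Finset.range n,
        (G k).indicator (fun ω => ‖X (k + 1) ω‖ ^ 2 - ‖X k ω‖ ^ 2) ω := rfl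
    rw [this]
    exact integrable_finset_sum _ fun k _ => hDint k
  have hYavg : ∀ n, ∫ ω, Y n ω ∂μ = ∑ k ∈ Finset.range n, (μ (G k)).toReal := by
    intro n
    rw [hY]
    rw [integral_finset_sum _ fun k _ => hDint k]
    refine Finset.sum_congr rfl fun k _ => ?_
    rw [integral_indicator (hGm k),
      integral_sub (hXsq_int (k + 1)).integrableOn (hXsq_int k).integrableOn,
      key k]
    ring
  have hYstruct : ∀ n ω, ∃ j, j ≤ n ∧ Y n ω = ‖X j ω‖ ^ 2 ∧ (∀ i, i < j → ω ∈ G i)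
      ∧ (j = n ∨ ω ∉ G j) := by
    intro n ω
    by_cases h : ∀ k, k < n → ω ∈ G k
    · refine ⟨n, le_rfl, ?_, h, Or.inl rfl⟩
      have hc : ∀ k ∈ Finset.range n,
          (G k).indicator (fun ω => ‖X (k + 1) ω‖ ^ 2 - ‖X k ω‖ ^ 2) ω
          = ‖X (k + 1) ω‖ ^ 2 - ‖X k ω‖ ^ 2 := fun k hk =>
        Set.indicator_of_mem (h k (Finset.mem_range.1 hk)) _
      show (∑ k ∈ Finset.range n, (G k).indicator _ ω) = _
      rw [Finset.sum_congr rfl hc, Finset.sum_range_sub (fun k => ‖X k ω‖ ^ 2)]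
      simp [hX]
    · push_neg at h
      obtain ⟨k0, hk0n, hk0⟩ := h
      have hex : ∃ k, k < n ∧ ω ∉ G k := ⟨k0, hk0n, hk0⟩
      set j := Nat.find hex with hj
      obtain ⟨hjn, hjG⟩ := Nat.find_spec hex
      have hmemlt : ∀ i, i < j → ω ∈ G i := by
        intro i hi
        by_contra hcon
        exact Nat.find_min hex hi ⟨hi.trans hjn, hcon⟩
      refine ⟨j, hjn.le, ?_, hmemlt, Or.inr hjG⟩
      have hzero : ∀ k ∈ Finset.range n, k ∉ Finset.range j →
          (G k).indicator (fun ω => ‖X (k + 1) ω‖ ^ 2 - ‖X k ω‖ ^ 2) ω = 0 := by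
        intro k _ hk
        have hjk : j ≤ k := by simpa using hk
        exact Set.indicator_of_notMem (fun hmem => hjG (hGanti hjk hmem)) _
      show (∑ k ∈ Finset.range n, (G k).indicator _ ω) = _
      rw [← Finset.sum_subset (Finset.range_subset_range.2 hjn.le) hzero,
        Finset.sum_congr rfl (fun k hk =>
          Set.indicator_of_mem (hmemlt k (Finset.mem_range.1 hk)) _),
        Finset.sum_range_sub (fun k => ‖X k ω‖ ^ 2)]
      simp [hX]
  have hYnonneg : ∀ n ω, 0 ≤ Y n ω := by
    intro n ω
    obtain ⟨j, _, hYeq, _, _⟩ := hYstruct n ω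
    rw [hYeq]; positivity
  have hYub : ∀ n, ∀ᵐ ω ∂μ, Y n ω ≤ (R + B) ^ 2 := by
    intro n
    filter_upwards [hball] with ω hb
    obtain ⟨j, hjn, hYeq, hmem, _⟩ := hYstruct n ω
    rw [hYeq]
    cases j with
    | zero =>
      have : ‖X 0 ω‖ = 0 := by simp [hX]
      rw [this]; simpa using sq_nonneg (R + B)
    | succ i =>
      have h1 : ‖X i ω‖ < R := (hmem i (Nat.lt_succ_self i)) i le_rfl
      have h2 : ‖X (i + 1) ω‖ ≤ ‖X i ω‖ + B := by
        calc ‖X (i + 1) ω‖ ≤ ‖X i ω‖ + ‖M (i + 1) ω - M i ω‖ := by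
              rw [hXstep i ω]; exact norm_add_le _ _
          _ ≤ ‖X i ω‖ + B := by linarith [hb i]
      have h3 : ‖X (i + 1) ω‖ ≤ R + B := by linarith
      exact pow_le_pow_left₀ (norm_nonneg _) h3 2
  have hYlb : ∀ n ω, ω ∉ G n → R ^ 2 ≤ Y (n + 1) ω := by
    intro n ω hωn
    obtain ⟨j, hjn1, hYeq, hmem, hlast⟩ := hYstruct (n + 1) ω
    rw [hYeq]
    have hjG : ω ∉ G j := by
      rcases hlast with rfl | hl
      · exact absurd (hmem n (Nat.lt_succ_self n)) hωn
      · exact hl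
    have hexk : ∃ k, k ≤ j ∧ R ≤ ‖X k ω‖ := by
      by_contra hcon
      push_neg at hcon
      exact hjG fun k hk => hcon k hk
    obtain ⟨k, hkj, hk⟩ := hexk
    have hkey : R ≤ ‖X j ω‖ := by
      rcases lt_or_eq_of_le hkj with hlt | rfl
      · exact absurd hk (not_le.2 ((hmem k hlt) k le_rfl))
      · exact hk
    exact pow_le_pow_left₀ hR hkey 2
  -- upper bound
  have hupper : ∫⁻ ω, τ ω ∂μ ≤ ENNReal.ofReal ((R + B) ^ 2) := by
    rw [hlint, ENNReal.tsum_eq_iSup_nat]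
    refine iSup_le fun n => ?_
    have h1 : ∑ k ∈ Finset.range n, μ (G k)
        = ENNReal.ofReal (∑ k ∈ Finset.range n, (μ (G k)).toReal) := by
      rw [ENNReal.ofReal_sum_of_nonneg (fun k _ => ENNReal.toReal_nonneg)]
      exact Finset.sum_congr rfl fun k _ =>
        (ENNReal.ofReal_toReal (measure_ne_top μ _)).symm
    rw [h1]
    refine ENNReal.ofReal_le_ofReal ?_
    rw [← hYavg n]
    have h2 := integral_mono_ae (hYint n) (integrable_const ((R + B) ^ 2)) (hYub n)
    simpa using h2
  -- lower bound
  have hlower : ENNReal.ofReal (R ^ 2) ≤ ∫⁻ ω, τ ω ∂μ := by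
    rw [hlint]
    by_cases htop : ∑' n, μ (G n) = ⊤
    · rw [htop]; exact le_top
    · have hterm : Tendsto (fun n => μ (G n)) atTop (𝓝 0) :=
        ENNReal.tendsto_atTop_zero_of_tsum_ne_top htop
      have hterm' : Tendsto (fun n => (μ (G n)).toReal) atTop (𝓝 0) := by
        have h := (ENNReal.tendsto_toReal (a := 0) (by simp)).comp hterm
        exact h
      have hpartial : ∀ n, ∑ k ∈ Finset.range n, (μ (G k)).toReal
          ≤ (∑' n, μ (G n)).toReal := by
        intro n
        have h1 : ∑ k ∈ Finset.range n, μ (G k) ≤ ∑' n, μ (G n) :=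
          ENNReal.sum_le_tsum _
        have h2 := ENNReal.toReal_mono htop h1
        rwa [ENNReal.toReal_sum (fun k _ => measure_ne_top μ _)] at h2
      have hineq : ∀ n, R ^ 2 * (1 - (μ (G n)).toReal) ≤ (∑' n, μ (G n)).toReal := by
        intro n
        have h1 : ∫ ω, ((G n)ᶜ.indicator (fun _ => R ^ 2) ω) ∂μ ≤ ∫ ω, Y (n + 1) ω ∂μ := by
          refine integral_mono_ae ((integrable_const _).indicator (hGm n).compl)
            (hYint (n + 1)) ?_
          refine Eventually.of_forall fun ω => ?_
          by_cases hω : ω ∈ G n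
          · rw [Set.indicator_of_notMem (by simpa using hω)]
            exact hYnonneg (n + 1) ω
          · rw [Set.indicator_of_mem (by simpa using hω)]
            exact hYlb n ω hω
        have h2 : ∫ ω, ((G n)ᶜ.indicator (fun _ => R ^ 2) ω) ∂μ
            = R ^ 2 * (1 - (μ (G n)).toReal) := by
          rw [integral_indicator (hGm n).compl, setIntegral_const, measureReal_def,
            measure_compl (hGm n) (measure_ne_top μ _), measure_univ,
            ENNReal.toReal_sub_of_le prob_le_one ENNReal.one_ne_top]
          simp [smul_eq_mul, mul_comm, measure_univ]
        calc R ^ 2 * (1 - (μ (G n)).toReal)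
            = ∫ ω, ((G n)ᶜ.indicator (fun _ => R ^ 2) ω) ∂μ := h2.symm
          _ ≤ ∫ ω, Y (n + 1) ω ∂μ := h1
          _ = ∑ k ∈ Finset.range (n + 1), (μ (G k)).toReal := hYavg (n + 1)
          _ ≤ (∑' n, μ (G n)).toReal := hpartial (n + 1)
      have hlim : Tendsto (fun n => R ^ 2 * (1 - (μ (G n)).toReal)) atTop
          (𝓝 (R ^ 2 * (1 - 0))) :=
        tendsto_const_nhds.mul (tendsto_const_nhds.sub hterm')
      have hfin : R ^ 2 ≤ (∑' n, μ (G n)).toReal := by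
        have h := le_of_tendsto hlim (Eventually.of_forall hineq)
        simpa using h
      calc ENNReal.ofReal (R ^ 2) ≤ ENNReal.ofReal ((∑' n, μ (G n)).toReal) :=
            ENNReal.ofReal_le_ofReal hfin
        _ = ∑' n, μ (G n) := ENNReal.ofReal_toReal htop
  exact ⟨hlower, hupper⟩
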